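/- Let α_1 ∣ ⋯ ∣ α_r and β_1 ∣ ⋯ ∣ β_{r+x} be chains of monic polynomials over a field, with x, z integers, 0 ≤ x ≤ z, satisfying the interlacing condition β_i ∣ α_i ∣ β_{i+z} for 1 ≤ i ≤ r (with β_j = 0 for j > r+x, and any polynomial divides 0). Then Σ_{i=1}^{r+x} deg(β_i) ≥ Σ_{i=1}^{r+x−z} deg(α_i); equivalently, Σ_{i=1}^{r} deg(α_i) − Σ_{i=1}^{r+x} deg(β_i) ≤ Σ_{i=r+x−z+1}^{r} deg(α_i). -/
import Mathlib


/-- If `β_i ∣ α_i ∣ β_{i+z}` for `1 ≤ i ≤ r` (with `β_j = 0` for `j > r+x`),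
then `Σ_{i=1}^{r+x} deg(β_i) ≥ Σ_{i=1}^{r+x-z} deg(α_i)`. -/
theorem stmt5 (F : Type*) [Field F] (r x z : ℕ) (hxz : x ≤ z)
    (α β : ℤ → Polynomial F)
    (hα1 : ∀ i : ℤ, i < 1 → α i = 1)
    (hαm : ∀ i : ℤ, 1 ≤ i → i ≤ (r : ℤ) → (α i).Monic)
    (hαchain : ∀ i : ℤ, 1 ≤ i → i < (r : ℤ) → α i ∣ α (i + 1))
    (hβ1 : ∀ i : ℤ, i < 1 → β i = 1)
    (hβm : ∀ i : ℤ, 1 ≤ i → i ≤ (r : ℤ) + x → (β i).Monic)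
    (hβchain : ∀ i : ℤ, 1 ≤ i → i < (r : ℤ) + x → β i ∣ β (i + 1))
    (hβ0 : ∀ i : ℤ, (r : ℤ) + x < i → β i = 0)
    (hinter1 : ∀ i : ℤ, 1 ≤ i → i ≤ (r : ℤ) → β i ∣ α i)
    (hinter2 : ∀ i : ℤ, 1 ≤ i → i ≤ (r : ℤ) → α i ∣ β (i + z)) :
    ∑ i ∈ Finset.Icc (1 : ℤ) ((r : ℤ) + x - z), ((α i).natDegree : ℤ)
      ≤ ∑ i ∈ Finset.Icc (1 : ℤ) ((r : ℤ) + x), ((β i).natDegree : ℤ) := by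
  have step1 : ∑ i ∈ Finset.Icc (1 : ℤ) ((r : ℤ) + x - z), ((α i).natDegree : ℤ)
      ≤ ∑ i ∈ Finset.Icc (1 : ℤ) ((r : ℤ) + x - z), ((β (i + z)).natDegree : ℤ) := by
    apply Finset.sum_le_sum
    intro i hi
    simp only [Finset.mem_Icc] at hi
    have hi1 : (1 : ℤ) ≤ i := hi.1
    have hir : i ≤ (r : ℤ) := by
      have : (x : ℤ) ≤ z := by exact_mod_cast hxz
      omega
    have hz0 : (0 : ℤ) ≤ z := Int.natCast_nonneg z
    have hmon : (β (i + z)).Monic := hβm (i + z) (by omega) (by omega)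
    have hdvd : α i ∣ β (i + z) := hinter2 i hi1 hir
    exact_mod_cast Polynomial.natDegree_le_of_dvd hdvd hmon.ne_zero
  refine step1.trans ?_
  have shift : ∑ i ∈ Finset.Icc (1 : ℤ) ((r : ℤ) + x - z), ((β (i + z)).natDegree : ℤ)
      = ∑ j ∈ Finset.Icc ((1 : ℤ) + z) ((r : ℤ) + x), ((β j).natDegree : ℤ) := by
    have he : Finset.Icc ((1 : ℤ) + z) ((r : ℤ) + x)
        = Finset.map (addRightEmbedding (z : ℤ)) (Finset.Icc 1 ((r : ℤ) + x - z)) := by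
      rw [Finset.map_add_right_Icc]
      congr 1
      ring
    rw [he, Finset.sum_map]
    rfl
  rw [shift]
  apply Finset.sum_le_sum_of_subset_of_nonneg
  · apply Finset.Icc_subset_Icc_left
    omega
  · intro i _ _
    positivity
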